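/- Let d ≥ 1, let B̄ and S^{d−1} denote the closed unit ball and the unit sphere of ℝ^d, and let h : B̄ → ℝ be continuous and convex; set g = h restricted to S^{d−1}. Then L(∂h(B)) = 0 (i.e. the Monge–Ampère measure of h on the open ball B vanishes) if and only if h is the convex envelope of g, that is, h(x) = sup { a(x) : a : ℝ^d → ℝ affine and a(ℓ) ≤ g(ℓ) for all ℓ ∈ S^{d−1} } for every x ∈ B̄. -/

import Mathlib

open scoped RealInnerProductSpace
open MeasureTheory
open Metric Set

/-- The subdifferential of `f : O → ℝ` at `x`:
`∂f(x) = {p : f y ≥ f x + ⟨p, y − x⟩ for all y ∈ O}`. -/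
def subdiff {d : ℕ} (O : Set (EuclideanSpace ℝ (Fin d)))
    (f : EuclideanSpace ℝ (Fin d) → ℝ) (x : EuclideanSpace ℝ (Fin d)) :
    Set (EuclideanSpace ℝ (Fin d)) :=
  {p | ∀ y ∈ O, f x + ⟪p, y - x⟫ ≤ f y}

/-- `∂f(ω) = ⋃_{x ∈ ω} ∂f(x)`; its Lebesgue measure is the Monge–Ampère measure
`MA(f)(ω)`. -/
def subdiffSet {d : ℕ} (O : Set (EuclideanSpace ℝ (Fin d)))
    (f : EuclideanSpace ℝ (Fin d) → ℝ) (ω : Set (EuclideanSpace ℝ (Fin d))) :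
    Set (EuclideanSpace ℝ (Fin d)) :=
  ⋃ x ∈ ω, subdiff O f x

/-- Existence of approximate affine minorants (Hahn–Banach separation). -/
lemma aux_minorant {d : ℕ} (h : EuclideanSpace ℝ (Fin d) → ℝ)
    (hcont : ContinuousOn h (closedBall (0 : EuclideanSpace ℝ (Fin d)) 1))
    (hconv : ConvexOn ℝ (closedBall (0 : EuclideanSpace ℝ (Fin d)) 1) h)
    (x : EuclideanSpace ℝ (Fin d)) (hx : x ∈ closedBall (0 : EuclideanSpace ℝ (Fin d)) 1)
    (ε : ℝ) (hε : 0 < ε) :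
    ∃ v : EuclideanSpace ℝ (Fin d), ∃ β : ℝ,
      (∀ y ∈ closedBall (0 : EuclideanSpace ℝ (Fin d)) 1, ⟪v, y⟫ + β ≤ h y) ∧
      h x - ε < ⟪v, x⟫ + β := by
  set K : Set (EuclideanSpace ℝ (Fin d) × ℝ) :=
    {p | p.1 ∈ closedBall (0 : EuclideanSpace ℝ (Fin d)) 1 ∧ h p.1 ≤ p.2} with hK
  have hKconv : Convex ℝ K := hconv.convex_epigraph
  have hKclosed : IsClosed K := by
    have : K = (closedBall (0 : EuclideanSpace ℝ (Fin d)) 1 ×ˢ (univ : Set ℝ)) ∩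
        ((fun p : EuclideanSpace ℝ (Fin d) × ℝ => h p.1 - p.2) ⁻¹' Iic 0) := by
      ext p; simp [hK, sub_nonpos]
    rw [this]
    exact ContinuousOn.preimage_isClosed_of_isClosed
      ((hcont.comp continuous_fst.continuousOn (fun p hp => hp.1)).sub
        continuous_snd.continuousOn)
      (Metric.isClosed_closedBall.prod isClosed_univ) isClosed_Iic
  have hnot : (x, h x - ε) ∉ K := by
    rintro ⟨-, hle⟩
    simp only at hle
    linarith
  obtain ⟨f, u, hfu, hfK⟩ := geometric_hahn_banach_point_closed hKconv hKclosed hnot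
  have hdecomp : ∀ (y : EuclideanSpace ℝ (Fin d)) (t : ℝ),
      f (y, t) = f (y, 0) + t * f (0, 1) := by
    intro y t
    have h0 : ((y, t) : EuclideanSpace ℝ (Fin d) × ℝ)
        = (y, (0:ℝ)) + t • ((0 : EuclideanSpace ℝ (Fin d)), (1:ℝ)) := by
      simp [Prod.ext_iff]
    rw [h0, map_add, f.map_smul, smul_eq_mul]
  set c : ℝ := f (0, 1) with hc
  have hxK : ((x, h x) : EuclideanSpace ℝ (Fin d) × ℝ) ∈ K := ⟨hx, le_refl _⟩
  have h1 : f (x, 0) + (h x - ε) * c < u := by rw [← hdecomp]; exact hfu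
  have h2 : u < f (x, 0) + h x * c := by rw [← hdecomp]; exact hfK _ hxK
  have hcpos : 0 < c := by nlinarith
  refine ⟨(InnerProductSpace.toDual ℝ (EuclideanSpace ℝ (Fin d))).symm
    ((-(c⁻¹)) • (f.comp (ContinuousLinearMap.inl ℝ (EuclideanSpace ℝ (Fin d)) ℝ))),
    u / c, ?_, ?_⟩
  · intro y hy
    have hyK : ((y, h y) : EuclideanSpace ℝ (Fin d) × ℝ) ∈ K := ⟨hy, le_refl _⟩
    have h3 : u < f (y, 0) + h y * c := by rw [← hdecomp]; exact hfK _ hyK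
    rw [InnerProductSpace.toDual_symm_apply]
    simp only [ContinuousLinearMap.smul_apply, ContinuousLinearMap.comp_apply,
      ContinuousLinearMap.inl_apply, smul_eq_mul]
    have key : -c⁻¹ * f (y, 0) + u / c = (u - f (y, 0)) / c := by
      field_simp; ring
    rw [key, div_le_iff₀ hcpos]
    nlinarith
  · rw [InnerProductSpace.toDual_symm_apply]
    simp only [ContinuousLinearMap.smul_apply, ContinuousLinearMap.comp_apply,
      ContinuousLinearMap.inl_apply, smul_eq_mul]
    have key : -c⁻¹ * f (x, 0) + u / c = (u - f (x, 0)) / c := by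
      field_simp; ring
    rw [key, lt_div_iff₀ hcpos]
    nlinarith

lemma aux_bddAbove {d : ℕ} (hd : 1 ≤ d) (h : EuclideanSpace ℝ (Fin d) → ℝ)
    (hcont : ContinuousOn h (closedBall (0 : EuclideanSpace ℝ (Fin d)) 1))
    (x : EuclideanSpace ℝ (Fin d)) (hx : x ∈ closedBall (0 : EuclideanSpace ℝ (Fin d)) 1) :
    BddAbove {y : ℝ | ∃ v : EuclideanSpace ℝ (Fin d), ∃ β : ℝ,
      (∀ ℓ ∈ sphere (0 : EuclideanSpace ℝ (Fin d)) 1, ⟪v, ℓ⟫ + β ≤ h ℓ) ∧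
      y = ⟪v, x⟫ + β} := by
  have hpt : (EuclideanSpace.single (⟨0, hd⟩ : Fin d) (1:ℝ))
      ∈ sphere (0 : EuclideanSpace ℝ (Fin d)) 1 := by
    simp [mem_sphere_zero_iff_norm, EuclideanSpace.norm_single]
  obtain ⟨ℓM, hℓM, hmax⟩ := (isCompact_sphere (0 : EuclideanSpace ℝ (Fin d)) 1).exists_isMaxOn
    ⟨_, hpt⟩ (hcont.mono sphere_subset_closedBall)
  refine ⟨h ℓM, ?_⟩
  rintro y ⟨v, β, hvβ, rfl⟩
  have hxnorm : ‖x‖ ≤ 1 := by simpa [mem_closedBall_zero_iff] using hx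
  have hCS : ⟪v, x⟫ ≤ ‖v‖ := by
    calc ⟪v, x⟫ ≤ ‖v‖ * ‖x‖ := real_inner_le_norm v x
    _ ≤ ‖v‖ * 1 := by gcongr
    _ = ‖v‖ := mul_one _
  rcases eq_or_ne v 0 with rfl | hv
  · have := hvβ _ hpt
    simp only [inner_zero_left, zero_add] at this ⊢
    calc β ≤ h _ := this
    _ ≤ h ℓM := hmax hpt
  · have hnv : (0:ℝ) < ‖v‖ := norm_pos_iff.mpr hv
    have hℓv : (‖v‖⁻¹ • v) ∈ sphere (0 : EuclideanSpace ℝ (Fin d)) 1 := by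
      simp [mem_sphere_zero_iff_norm, norm_smul, abs_of_pos (inv_pos.mpr hnv),
        inv_mul_cancel₀ hnv.ne']
    have hval : ⟪v, ‖v‖⁻¹ • v⟫ = ‖v‖ := by
      rw [real_inner_smul_right, real_inner_self_eq_norm_sq]
      field_simp
    have h1 : ‖v‖ + β ≤ h (‖v‖⁻¹ • v) := by
      have := hvβ _ hℓv
      rwa [hval] at this
    calc ⟪v, x⟫ + β ≤ ‖v‖ + β := by linarith
    _ ≤ h (‖v‖⁻¹ • v) := h1
    _ ≤ h ℓM := hmax hℓv

/-- Let `h` be continuous and convex on the closed unit ball of `ℝ^d`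
and let `g` be its restriction to the unit sphere.  Then the Monge–Ampère measure of `h`
on the open ball vanishes, `L(∂h(B)) = 0`, if and only if `h` is the convex envelope of
`g`, i.e. `h x = sup {a x : a affine, a ≤ g on the sphere}` for every `x` in the closed
ball. -/
theorem stmt17 (d : ℕ) (hd : 1 ≤ d) (h : EuclideanSpace ℝ (Fin d) → ℝ)
    (hcont : ContinuousOn h (Metric.closedBall (0 : EuclideanSpace ℝ (Fin d)) 1))
    (hconv : ConvexOn ℝ (Metric.closedBall (0 : EuclideanSpace ℝ (Fin d)) 1) h) :
    volume (subdiffSet (Metric.ball (0 : EuclideanSpace ℝ (Fin d)) 1) h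
        (Metric.ball (0 : EuclideanSpace ℝ (Fin d)) 1)) = 0
      ↔ ∀ x ∈ Metric.closedBall (0 : EuclideanSpace ℝ (Fin d)) 1,
          h x = sSup {y : ℝ | ∃ v : EuclideanSpace ℝ (Fin d), ∃ β : ℝ,
            (∀ ℓ ∈ Metric.sphere (0 : EuclideanSpace ℝ (Fin d)) 1, ⟪v, ℓ⟫ + β ≤ h ℓ) ∧
            y = ⟪v, x⟫ + β} := by
  have hpt : (EuclideanSpace.single (⟨0, hd⟩ : Fin d) (1:ℝ))
      ∈ sphere (0 : EuclideanSpace ℝ (Fin d)) 1 := by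
    simp [mem_sphere_zero_iff_norm, EuclideanSpace.norm_single]
  constructor
  · -- MA = 0 → envelope
    intro hvol x hx
    have hbdd := aux_bddAbove hd h hcont x hx
    have hmemS : ∀ v β, (∀ y ∈ closedBall (0 : EuclideanSpace ℝ (Fin d)) 1, ⟪v, y⟫ + β ≤ h y) →
        (⟪v, x⟫ + β) ∈ {y : ℝ | ∃ v : EuclideanSpace ℝ (Fin d), ∃ β : ℝ,
          (∀ ℓ ∈ sphere (0 : EuclideanSpace ℝ (Fin d)) 1, ⟪v, ℓ⟫ + β ≤ h ℓ) ∧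
          y = ⟪v, x⟫ + β} := by
      intro v β hvβ
      exact ⟨v, β, fun ℓ hℓ => hvβ ℓ (sphere_subset_closedBall hℓ), rfl⟩
    have hSne : {y : ℝ | ∃ v : EuclideanSpace ℝ (Fin d), ∃ β : ℝ,
        (∀ ℓ ∈ sphere (0 : EuclideanSpace ℝ (Fin d)) 1, ⟪v, ℓ⟫ + β ≤ h ℓ) ∧
        y = ⟪v, x⟫ + β}.Nonempty := by
      obtain ⟨v, β, hvβ, -⟩ := aux_minorant h hcont hconv x hx 1 one_pos
      exact ⟨_, hmemS v β hvβ⟩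
    refine le_antisymm ?_ ?_
    · refine le_of_forall_sub_le fun ε hε => ?_
      obtain ⟨v, β, hvβ, hlt⟩ := aux_minorant h hcont hconv x hx ε hε
      exact hlt.le.trans (le_csSup hbdd (hmemS v β hvβ))
    · by_contra hlt
      push_neg at hlt
      obtain ⟨y₀, ⟨v, β, hvβ, rfl⟩, hxy⟩ := exists_lt_of_lt_csSup hSne hlt
      set m := ⟪v, x⟫ + β - h x with hm
      have hmpos : 0 < m := by linarith [hm]
      have hxn : ‖x‖ ≤ 1 := by simpa [mem_closedBall_zero_iff] using hx
      have hxball : x ∈ ball (0 : EuclideanSpace ℝ (Fin d)) 1 := by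
        rcases lt_or_eq_of_le hxn with h1 | h1
        · simpa [mem_ball_zero_iff] using h1
        · exfalso
          have hxs : x ∈ sphere (0 : EuclideanSpace ℝ (Fin d)) 1 := by
            simp [mem_sphere_zero_iff_norm, h1]
          have := hvβ x hxs
          linarith
      have hsub : ball v (m/2) ⊆
          subdiffSet (ball (0 : EuclideanSpace ℝ (Fin d)) 1) h
            (ball (0 : EuclideanSpace ℝ (Fin d)) 1) := by
        intro w hw
        have hq : ‖w - v‖ < m/2 := by
          simpa [mem_ball, dist_eq_norm] using hw
        have hφcont : ContinuousOn (fun y => h y - ⟪w, y⟫)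
            (closedBall (0 : EuclideanSpace ℝ (Fin d)) 1) :=
          hcont.sub (continuous_const.inner continuous_id).continuousOn
        obtain ⟨z, hzcb, hzmin⟩ := (isCompact_closedBall (0 : EuclideanSpace ℝ (Fin d)) 1
          ).exists_isMinOn ⟨0, by simp⟩ hφcont
        have hzmin' := isMinOn_iff.mp hzmin
        have hwv : ∀ y : EuclideanSpace ℝ (Fin d), ⟪w, y⟫ = ⟪v, y⟫ + ⟪w - v, y⟫ := by
          intro y; rw [inner_sub_left]; ring
        have hzn : ‖z‖ ≤ 1 := by simpa [mem_closedBall_zero_iff] using hzcb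
        have hzball : z ∈ ball (0 : EuclideanSpace ℝ (Fin d)) 1 := by
          rcases lt_or_eq_of_le hzn with h1 | h1
          · simpa [mem_ball_zero_iff] using h1
          · exfalso
            have hzs : z ∈ sphere (0 : EuclideanSpace ℝ (Fin d)) 1 := by
              simp [mem_sphere_zero_iff_norm, h1]
            have hb1 : ⟪v, z⟫ + β ≤ h z := hvβ z hzs
            have hCS1 : |⟪w - v, z⟫| ≤ ‖w - v‖ := by
              calc |⟪w - v, z⟫| ≤ ‖w - v‖ * ‖z‖ := abs_real_inner_le_norm _ _
              _ ≤ ‖w - v‖ * 1 := by gcongr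
              _ = ‖w - v‖ := mul_one _
            have hCS2 : |⟪w - v, x⟫| ≤ ‖w - v‖ := by
              calc |⟪w - v, x⟫| ≤ ‖w - v‖ * ‖x‖ := abs_real_inner_le_norm _ _
              _ ≤ ‖w - v‖ * 1 := by gcongr
              _ = ‖w - v‖ := mul_one _
            have hminx := hzmin' x hx
            rw [hwv z, hwv x] at hminx
            have habs1 := abs_le.mp hCS1
            have habs2 := abs_le.mp hCS2
            linarith
        refine Set.mem_iUnion₂.mpr ⟨z, hzball, ?_⟩
        intro y hy
        have := hzmin' y (ball_subset_closedBall hy)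
        rw [inner_sub_right]
        linarith
      have h0 : volume (ball v (m/2)) = 0 := measure_mono_null hsub hvol
      exact absurd h0 (Metric.measure_ball_pos volume v (by linarith)).ne'
  · -- envelope → MA = 0
    intro henv
    set F : EuclideanSpace ℝ (Fin d) → ℝ :=
      fun p => sSup ((fun y => ⟪p, y⟫ - h y) '' closedBall (0 : EuclideanSpace ℝ (Fin d)) 1)
      with hF
    have himg : ∀ p : EuclideanSpace ℝ (Fin d), ContinuousOn (fun y => ⟪p, y⟫ - h y)
        (closedBall (0 : EuclideanSpace ℝ (Fin d)) 1) := fun p =>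
      (continuous_const.inner continuous_id).continuousOn.sub hcont
    have hne : ∀ p : EuclideanSpace ℝ (Fin d),
        ((fun y => ⟪p, y⟫ - h y) '' closedBall (0 : EuclideanSpace ℝ (Fin d)) 1).Nonempty :=
      fun p => ⟨_, mem_image_of_mem _ (by simp : (0 : EuclideanSpace ℝ (Fin d)) ∈ _)⟩
    have hbddF : ∀ p : EuclideanSpace ℝ (Fin d),
        BddAbove ((fun y => ⟪p, y⟫ - h y) '' closedBall (0 : EuclideanSpace ℝ (Fin d)) 1) :=
      fun p => ((isCompact_closedBall _ _).image_of_continuousOn (himg p)).bddAbove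
    have hFbound : ∀ p y, y ∈ closedBall (0 : EuclideanSpace ℝ (Fin d)) 1 →
        ⟪p, y⟫ - h y ≤ F p := fun p y hy => le_csSup (hbddF p) (mem_image_of_mem _ hy)
    have key : ∀ p q : EuclideanSpace ℝ (Fin d), F p ≤ F q + ‖p - q‖ := by
      intro p q
      refine csSup_le (hne p) ?_
      rintro _ ⟨y, hy, rfl⟩
      show ⟪p, y⟫ - h y ≤ F q + ‖p - q‖
      have hyn : ‖y‖ ≤ 1 := by simpa [mem_closedBall_zero_iff] using hy
      have hsplit : ⟪p, y⟫ - h y = (⟪q, y⟫ - h y) + ⟪p - q, y⟫ := by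
        rw [inner_sub_left]; ring
      have hCS : ⟪p - q, y⟫ ≤ ‖p - q‖ := by
        calc ⟪p - q, y⟫ ≤ ‖p - q‖ * ‖y‖ := real_inner_le_norm _ _
        _ ≤ ‖p - q‖ * 1 := by gcongr
        _ = ‖p - q‖ := mul_one _
      linarith [hFbound q y hy]
    have hlip : LipschitzWith 1 F := by
      apply LipschitzWith.of_dist_le_mul
      intro p q
      rw [Real.dist_eq, NNReal.coe_one, one_mul, dist_eq_norm, abs_le]
      constructor
      · have := key q p
        rw [norm_sub_rev] at this
        linarith
      · linarith [key p q]
    have hnd : subdiffSet (ball (0 : EuclideanSpace ℝ (Fin d)) 1) h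
        (ball (0 : EuclideanSpace ℝ (Fin d)) 1) ⊆
        {p | ¬ DifferentiableAt ℝ F p} := by
      intro p hp
      obtain ⟨x, hx, hpx⟩ := Set.mem_iUnion₂.mp hp
      have hpx' : ∀ y ∈ ball (0 : EuclideanSpace ℝ (Fin d)) 1, h x + ⟪p, y - x⟫ ≤ h y := hpx
      have hxn : ‖x‖ < 1 := by simpa [mem_ball_zero_iff] using hx
      -- extend subgradient inequality to the closed ball
      have hsub' : ∀ y ∈ closedBall (0 : EuclideanSpace ℝ (Fin d)) 1,
          h x + ⟪p, y - x⟫ ≤ h y := by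
        intro y hy
        have hyn : ‖y‖ ≤ 1 := by simpa [mem_closedBall_zero_iff] using hy
        have hmemIoo : ∀ t ∈ Ioo (0:ℝ) 1,
            x + t • (y - x) ∈ ball (0 : EuclideanSpace ℝ (Fin d)) 1 := by
          intro t ht
          have heq : x + t • (y - x) = (1 - t) • x + t • y := by module
          rw [heq, mem_ball_zero_iff]
          have h1 : ‖(1 - t) • x + t • y‖ ≤ ‖(1 - t) • x‖ + ‖t • y‖ := norm_add_le _ _
          rw [norm_smul, norm_smul, Real.norm_of_nonneg (by linarith [ht.2] : (0:ℝ) ≤ 1 - t),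
            Real.norm_of_nonneg ht.1.le] at h1
          have h2 : (1 - t) * ‖x‖ < 1 - t := by
            have : (0:ℝ) < 1 - t := by linarith [ht.2]
            nlinarith
          have h3 : t * ‖y‖ ≤ t := by nlinarith [ht.1.le]
          linarith
        have hcurve : ∀ t ∈ Ioo (0:ℝ) 1,
            h x + t * ⟪p, y - x⟫ ≤ h (x + t • (y - x)) := by
          intro t ht
          have := hpx' _ (hmemIoo t ht)
          simpa [inner_smul_right] using this
        have hNB : (nhdsWithin (1:ℝ) (Ioo 0 1)).NeBot := right_nhdsWithin_Ioo_neBot one_pos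
        have hlim1 : Filter.Tendsto (fun t : ℝ => x + t • (y - x))
            (nhdsWithin 1 (Ioo 0 1)) (nhdsWithin y (closedBall (0 : EuclideanSpace ℝ (Fin d)) 1)) := by
          apply tendsto_nhdsWithin_of_tendsto_nhds_of_eventually_within
          · have hc : Continuous (fun t : ℝ => x + t • (y - x)) :=
              continuous_const.add (continuous_id.smul continuous_const)
            have h1 : x + (1:ℝ) • (y - x) = y := by module
            have := (hc.tendsto 1).mono_left (nhdsWithin_le_nhds
              (s := Ioo (0:ℝ) 1))
            rwa [h1] at this
          · filter_upwards [self_mem_nhdsWithin] with t ht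
            exact ball_subset_closedBall (hmemIoo t ht)
        have hlim2 : Filter.Tendsto (fun t : ℝ => h (x + t • (y - x)))
            (nhdsWithin 1 (Ioo 0 1)) (nhds (h y)) := (hcont y hy).tendsto.comp hlim1
        have hlim3 : Filter.Tendsto (fun t : ℝ => h x + t * ⟪p, y - x⟫)
            (nhdsWithin 1 (Ioo 0 1)) (nhds (h x + ⟪p, y - x⟫)) := by
          have hc : Continuous (fun t : ℝ => h x + t * ⟪p, y - x⟫) :=
            continuous_const.add (continuous_id.mul continuous_const)
          have := (hc.tendsto 1).mono_left (nhdsWithin_le_nhds (s := Ioo (0:ℝ) 1))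
          simpa using this
        exact le_of_tendsto_of_tendsto hlim3 hlim2
          (by filter_upwards [self_mem_nhdsWithin] with t ht using hcurve t ht)
      -- contact point on the sphere: minimize ℓ ↦ h ℓ - ⟪p, ℓ⟫ over the sphere
      have hψcont : ContinuousOn (fun ℓ => h ℓ - ⟪p, ℓ⟫)
          (sphere (0 : EuclideanSpace ℝ (Fin d)) 1) :=
        (hcont.mono sphere_subset_closedBall).sub
          (continuous_const.inner continuous_id).continuousOn
      obtain ⟨z, hzs, hzmin⟩ := (isCompact_sphere (0 : EuclideanSpace ℝ (Fin d)) 1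
        ).exists_isMinOn ⟨_, hpt⟩ hψcont
      have hzmin' := isMinOn_iff.mp hzmin
      have hzcb : z ∈ closedBall (0 : EuclideanSpace ℝ (Fin d)) 1 :=
        sphere_subset_closedBall hzs
      set δ : ℝ := (h z - ⟪p, z⟫) - (h x - ⟪p, x⟫) with hδ
      have hδ0 : 0 ≤ δ := by
        have := hsub' z hzcb
        rw [inner_sub_right] at this
        linarith
      have hδ0' : δ ≤ 0 := by
        by_contra hpos
        push_neg at hpos
        have hcomp : ∀ ℓ ∈ sphere (0 : EuclideanSpace ℝ (Fin d)) 1,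
            ⟪p, ℓ⟫ + (h x - ⟪p, x⟫ + δ) ≤ h ℓ := by
          intro ℓ hℓ
          have := hzmin' ℓ hℓ
          linarith
        have hmem : (⟪p, x⟫ + (h x - ⟪p, x⟫ + δ)) ∈ {y : ℝ |
            ∃ v : EuclideanSpace ℝ (Fin d), ∃ β : ℝ,
            (∀ ℓ ∈ sphere (0 : EuclideanSpace ℝ (Fin d)) 1, ⟪v, ℓ⟫ + β ≤ h ℓ) ∧
            y = ⟪v, x⟫ + β} := ⟨p, h x - ⟪p, x⟫ + δ, hcomp, rfl⟩
        have hle := le_csSup (aux_bddAbove hd h hcont x (ball_subset_closedBall hx)) hmem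
        rw [← henv x (ball_subset_closedBall hx)] at hle
        linarith
      have hδeq : δ = 0 := le_antisymm hδ0' hδ0
      -- F is not differentiable at p
      simp only [mem_setOf_eq]
      intro hdiff
      have hFx : F p = ⟪p, x⟫ - h x := by
        refine le_antisymm (csSup_le (hne p) ?_) (hFbound p x (ball_subset_closedBall hx))
        rintro _ ⟨y, hy, rfl⟩
        show ⟪p, y⟫ - h y ≤ ⟪p, x⟫ - h x
        have := hsub' y hy
        rw [inner_sub_right] at this
        linarith
      have hFz : F p = ⟪p, z⟫ - h z := by
        rw [hFx]
        linarith
      have hfderiv : ∀ w : EuclideanSpace ℝ (Fin d),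
          w ∈ closedBall (0 : EuclideanSpace ℝ (Fin d)) 1 → F p = ⟪p, w⟫ - h w →
          fderiv ℝ F p = innerSL ℝ w := by
        intro w hw hFw
        have hglobal : ∀ q, F p - ⟪w, p⟫ ≤ F q - ⟪w, q⟫ := by
          intro q
          have h1 : ⟪q, w⟫ - h w ≤ F q := hFbound q w hw
          have h2 : ⟪p, w⟫ = ⟪w, p⟫ := real_inner_comm _ _
          have h3 : ⟪q, w⟫ = ⟪w, q⟫ := real_inner_comm _ _
          rw [hFw]
          linarith
        have hlocmin : IsLocalMin (fun q => F q - ⟪w, q⟫) p :=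
          Filter.Eventually.of_forall hglobal
        have hcoe : (fun q : EuclideanSpace ℝ (Fin d) => ⟪w, q⟫) = ⇑(innerSL ℝ w) :=
          funext fun q => (innerSL_apply_apply (𝕜 := ℝ) w q).symm
        have hdw : DifferentiableAt ℝ (fun q : EuclideanSpace ℝ (Fin d) => ⟪w, q⟫) p := by
          rw [hcoe]
          exact (innerSL ℝ w).differentiableAt
        have h0 := hlocmin.fderiv_eq_zero
        have heq : fderiv ℝ (fun q => F q - ⟪w, q⟫) p = fderiv ℝ F p - innerSL ℝ w := by
          rw [fderiv_fun_sub hdiff hdw, hcoe, ContinuousLinearMap.fderiv]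
        rw [heq] at h0
        exact sub_eq_zero.mp h0
      have e1 := hfderiv x (ball_subset_closedBall hx) hFx
      have e2 := hfderiv z hzcb hFz
      have h4 : (innerSL ℝ x : EuclideanSpace ℝ (Fin d) →L[ℝ] ℝ) = innerSL ℝ z := by
        rw [← e1, ← e2]
      have h5 := DFunLike.congr_fun h4 (x - z)
      rw [innerSL_apply_apply, innerSL_apply_apply] at h5
      have h6 : ⟪x - z, x - z⟫ = 0 := by
        rw [inner_sub_left]
        linarith
      have h7 : x = z := by
        have := inner_self_eq_zero.mp h6
        exact sub_eq_zero.mp this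
      have h8 : ‖z‖ = 1 := by simpa [mem_sphere_zero_iff_norm] using hzs
      rw [h7, h8] at hxn
      exact lt_irrefl _ hxn
    have hae := hlip.ae_differentiableAt (μ := volume)
    have h0 : volume {p : EuclideanSpace ℝ (Fin d) | ¬ DifferentiableAt ℝ F p} = 0 := by
      simpa [ae_iff] using hae
    exact measure_mono_null hnd h0
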